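/- Define the real 3×3 matrices A = [[4,−1,−1],[−1,4,0],[−1,0,4]], B = [[1/2,0,0],[1/2,0,0],[−1/2,0,0]], C₀ = [[3/2,−1,−1],[−1,5/4,1/4],[−1,1/4,5/4]], R₀ = [[1/2,3/4,1/4],[1/2,1/4,3/4],[0,0,0]]. Let a > 0, K > 0, and for each α ∈ (0,a) let C(α) and R(α) be real 3×3 matrices with C(α) symmetric, such that every entry of α·C(α) − C₀ and of R(α) − R₀ has absolute value at most K·α. Define the 6×6 matrices S̃(α) = [[A, B],[Bᵀ, C(α)]], E(α) = [[I, −R(α)],[0, I]] (I the 3×3 identity), and S(α) = E(α) S̃(α) E(α)ᵀ. Then there exists α₁ ∈ (0,a] such that S(α) is invertible for all α ∈ (0,α₁), and S(α)^{-1} converges entrywise, as α → 0⁺, to the 6×6 matrix T₀ = [[A^{-1}, A^{-1}R₀],[R₀ᵀA^{-1}, R₀ᵀA^{-1}R₀]]; moreover T₀ is entrywise positive and singular. -/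

import Mathlib

open Matrix Filter

/-- The block `A` of the stiffness matrix. -/
noncomputable def Amat : Matrix (Fin 3) (Fin 3) ℝ :=
  !![4, -1, -1; -1, 4, 0; -1, 0, 4]

/-- The block `B` of the stiffness matrix. -/
noncomputable def Bmat : Matrix (Fin 3) (Fin 3) ℝ :=
  !![1/2, 0, 0; 1/2, 0, 0; -1/2, 0, 0]

/-- The leading term `C₀` of `α·C(α)`. -/
noncomputable def C0mat : Matrix (Fin 3) (Fin 3) ℝ :=
  !![3/2, -1, -1; -1, 5/4, 1/4; -1, 1/4, 5/4]

/-- The limit `R₀` of the change-of-basis block `R(α)`. -/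
noncomputable def R0mat : Matrix (Fin 3) (Fin 3) ℝ :=
  !![1/2, 3/4, 1/4; 1/2, 1/4, 3/4; 0, 0, 0]

/-- The stiffness matrix in the hierarchical basis. -/
noncomputable def Stilde (C : ℝ → Matrix (Fin 3) (Fin 3) ℝ) (t : ℝ) :
    Matrix (Fin 3 ⊕ Fin 3) (Fin 3 ⊕ Fin 3) ℝ :=
  Matrix.fromBlocks Amat Bmat Bmatᵀ (C t)

/-- The change-of-basis matrix. -/
noncomputable def Emat (R : ℝ → Matrix (Fin 3) (Fin 3) ℝ) (t : ℝ) :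
    Matrix (Fin 3 ⊕ Fin 3) (Fin 3 ⊕ Fin 3) ℝ :=
  Matrix.fromBlocks 1 (-(R t)) 0 1

/-- The stiffness matrix in the nodal basis. -/
noncomputable def Smat (C R : ℝ → Matrix (Fin 3) (Fin 3) ℝ) (t : ℝ) :
    Matrix (Fin 3 ⊕ Fin 3) (Fin 3 ⊕ Fin 3) ℝ :=
  Emat R t * Stilde C t * (Emat R t)ᵀ

/-- The limit matrix `T₀`. -/
noncomputable def T0mat : Matrix (Fin 3 ⊕ Fin 3) (Fin 3 ⊕ Fin 3) ℝ :=
  Matrix.fromBlocks Amat⁻¹ (Amat⁻¹ * R0mat) (R0matᵀ * Amat⁻¹) (R0matᵀ * Amat⁻¹ * R0mat)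

section Aux

lemma cancel6 {a b : Matrix (Fin 3 ⊕ Fin 3) (Fin 3 ⊕ Fin 3) ℝ}
    (h : a * b = 1) (c : Matrix (Fin 3 ⊕ Fin 3) (Fin 3 ⊕ Fin 3) ℝ) : a * (b * c) = c := by
  rw [← Matrix.mul_assoc, h, Matrix.one_mul]

lemma tri_up (X : Matrix (Fin 3) (Fin 3) ℝ) :
    (Matrix.fromBlocks 1 X 0 1 : Matrix (Fin 3 ⊕ Fin 3) (Fin 3 ⊕ Fin 3) ℝ) *
      Matrix.fromBlocks 1 (-X) 0 1 = 1 := by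
  simp [Matrix.fromBlocks_multiply, ← Matrix.fromBlocks_one]

lemma tri_up' (X : Matrix (Fin 3) (Fin 3) ℝ) :
    (Matrix.fromBlocks 1 (-X) 0 1 : Matrix (Fin 3 ⊕ Fin 3) (Fin 3 ⊕ Fin 3) ℝ) *
      Matrix.fromBlocks 1 X 0 1 = 1 := by
  simpa using tri_up (-X)

lemma tri_low (X : Matrix (Fin 3) (Fin 3) ℝ) :
    (Matrix.fromBlocks 1 0 X 1 : Matrix (Fin 3 ⊕ Fin 3) (Fin 3 ⊕ Fin 3) ℝ) *
      Matrix.fromBlocks 1 0 (-X) 1 = 1 := by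
  simp [Matrix.fromBlocks_multiply, ← Matrix.fromBlocks_one]

lemma tri_low' (X : Matrix (Fin 3) (Fin 3) ℝ) :
    (Matrix.fromBlocks 1 0 (-X) 1 : Matrix (Fin 3 ⊕ Fin 3) (Fin 3 ⊕ Fin 3) ℝ) *
      Matrix.fromBlocks 1 0 X 1 = 1 := by
  simpa using tri_low (-X)

noncomputable def Phi (p : Matrix (Fin 3) (Fin 3) ℝ × Matrix (Fin 3) (Fin 3) ℝ) :
    Matrix (Fin 3 ⊕ Fin 3) (Fin 3 ⊕ Fin 3) ℝ :=
  Matrix.fromBlocks 1 0 p.1ᵀ 1 *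
    (Matrix.fromBlocks 1 (-(Amat⁻¹ * Bmat)) 0 1 *
      (Matrix.fromBlocks Amat⁻¹ 0 0 p.2 *
        (Matrix.fromBlocks 1 0 (-(Bmatᵀ * Amat⁻¹)) 1 *
          Matrix.fromBlocks 1 p.1 0 1)))

lemma continuous_fromBlocks {X : Type*} [TopologicalSpace X]
    {A B C D : X → Matrix (Fin 3) (Fin 3) ℝ} (hA : Continuous A) (hB : Continuous B)
    (hC : Continuous C) (hD : Continuous D) :
    Continuous fun x => Matrix.fromBlocks (A x) (B x) (C x) (D x) := by
  apply continuous_matrix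
  rintro (i | i) (j | j)
  · simpa only [Matrix.fromBlocks_apply₁₁] using hA.matrix_elem i j
  · simpa only [Matrix.fromBlocks_apply₁₂] using hB.matrix_elem i j
  · simpa only [Matrix.fromBlocks_apply₂₁] using hC.matrix_elem i j
  · simpa only [Matrix.fromBlocks_apply₂₂] using hD.matrix_elem i j

lemma continuous_Phi : Continuous Phi := by
  have h1 : Continuous fun p : Matrix (Fin 3) (Fin 3) ℝ × Matrix (Fin 3) (Fin 3) ℝ => p.1 :=
    continuous_fst
  have h2 : Continuous fun p : Matrix (Fin 3) (Fin 3) ℝ × Matrix (Fin 3) (Fin 3) ℝ => p.2 :=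
    continuous_snd
  exact (continuous_fromBlocks continuous_const continuous_const h1.matrix_transpose
      continuous_const).matrix_mul
    ((continuous_fromBlocks continuous_const continuous_const continuous_const
        continuous_const).matrix_mul
      ((continuous_fromBlocks continuous_const continuous_const continuous_const h2).matrix_mul
        ((continuous_fromBlocks continuous_const continuous_const continuous_const
            continuous_const).matrix_mul
          (continuous_fromBlocks continuous_const h1 continuous_const continuous_const))))

lemma Phi_limit : Phi (R0mat, 0) = T0mat := by
  simp [Phi, T0mat, Matrix.fromBlocks_multiply, Matrix.mul_assoc]

lemma detA : Amat.det = 56 := by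
  norm_num [Amat, Matrix.det_fin_three, Matrix.cons_val_zero, Matrix.cons_val_one, Matrix.cons_val_two, Matrix.head_cons, Matrix.vecHead, Matrix.vecTail, Function.comp]

lemma detC0 : C0mat.det = 1/4 := by
  norm_num [C0mat, Matrix.det_fin_three, Matrix.cons_val_zero, Matrix.cons_val_one, Matrix.cons_val_two, Matrix.head_cons, Matrix.vecHead, Matrix.vecTail, Function.comp]

lemma Ainv_eq : Amat⁻¹ = !![16/56, 4/56, 4/56; 4/56, 15/56, 1/56; 4/56, 1/56, 15/56] := by
  apply Matrix.inv_eq_right_inv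
  ext i j
  fin_cases i <;> fin_cases j <;>
    norm_num [Amat, Matrix.mul_apply, Fin.sum_univ_three, Matrix.one_apply, Fin.ext_iff, Matrix.cons_val_zero, Matrix.cons_val_one, Matrix.cons_val_two, Matrix.head_cons, Matrix.vecHead, Matrix.vecTail, Function.comp]

end Aux

/-- The inverse stiffness matrix of the patch containing a nearly degenerate
triangulation converges entrywise, as the small angle tends to `0⁺`, to the
singular entrywise positive matrix `T₀`. -/
theorem inverse_stiffness_tendsto_T0
    (a K : ℝ) (ha : 0 < a) (hK : 0 < K)
    (C R : ℝ → Matrix (Fin 3) (Fin 3) ℝ)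
    (hCsymm : ∀ t, 0 < t → t < a → (C t).IsSymm)
    (hCapprox : ∀ t, 0 < t → t < a → ∀ i j, |t * C t i j - C0mat i j| ≤ K * t)
    (hRapprox : ∀ t, 0 < t → t < a → ∀ i j, |R t i j - R0mat i j| ≤ K * t) :
    (∃ α₁, 0 < α₁ ∧ α₁ ≤ a ∧
      (∀ t, 0 < t → t < α₁ → IsUnit (Smat C R t)) ∧
      (∀ i j, Tendsto (fun t => (Smat C R t)⁻¹ i j)
        (nhdsWithin 0 (Set.Ioi 0)) (nhds (T0mat i j)))) ∧
    (∀ i j, 0 < T0mat i j) ∧ T0mat.det = 0 := by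
  -- notation
  set M : Matrix (Fin 3) (Fin 3) ℝ := Bmatᵀ * Amat⁻¹ * Bmat with hMdef
  set g : ℝ → Matrix (Fin 3) (Fin 3) ℝ := fun t => t • C t - t • M with hgdef
  have hIoa : Set.Ioo (0:ℝ) a ∈ nhdsWithin (0:ℝ) (Set.Ioi 0) :=
    Ioo_mem_nhdsGT_of_mem ⟨le_refl 0, ha⟩
  have hdetA' : IsUnit Amat.det := by rw [detA]; norm_num
  haveI : Invertible Amat := Amat.invertibleOfIsUnitDet hdetA'
  have hAAinv : Amat * Amat⁻¹ = 1 := Matrix.mul_nonsing_inv _ hdetA'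
  -- entrywise limits
  have hg : Tendsto g (nhdsWithin (0:ℝ) (Set.Ioi 0)) (nhds C0mat) := by
    refine tendsto_pi_nhds.mpr fun i => ?_
    refine tendsto_pi_nhds.mpr fun j => ?_
    rw [← tendsto_sub_nhds_zero_iff]
    apply squeeze_zero_norm' (a := fun t => (K + |M i j|) * t)
    · filter_upwards [hIoa] with t ht
      have h1 := hCapprox t ht.1 ht.2 i j
      have : g t i j - C0mat i j = (t * C t i j - C0mat i j) - t * M i j := by
        simp [hgdef, Matrix.sub_apply, Matrix.smul_apply, smul_eq_mul]; ring
      rw [Real.norm_eq_abs, this]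
      calc |t * C t i j - C0mat i j - t * M i j|
          ≤ |t * C t i j - C0mat i j| + |t * M i j| := abs_sub _ _
        _ ≤ K * t + |t| * |M i j| := by rw [abs_mul]; exact add_le_add h1 le_rfl
        _ = (K + |M i j|) * t := by rw [abs_of_pos ht.1]; ring
    · have : Tendsto (fun t : ℝ => (K + |M i j|) * t) (nhds 0) (nhds ((K + |M i j|) * 0)) :=
        (continuous_const.mul continuous_id).tendsto 0
      simpa using this.mono_left nhdsWithin_le_nhds
  have hR : Tendsto R (nhdsWithin (0:ℝ) (Set.Ioi 0)) (nhds R0mat) := by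
    refine tendsto_pi_nhds.mpr fun i => ?_
    refine tendsto_pi_nhds.mpr fun j => ?_
    rw [← tendsto_sub_nhds_zero_iff]
    apply squeeze_zero_norm' (a := fun t => K * t)
    · filter_upwards [hIoa] with t ht
      rw [Real.norm_eq_abs]
      exact hRapprox t ht.1 ht.2 i j
    · have : Tendsto (fun t : ℝ => K * t) (nhds 0) (nhds (K * 0)) :=
        (continuous_const.mul continuous_id).tendsto 0
      simpa using this.mono_left nhdsWithin_le_nhds
  -- determinant of g tends to 1/4
  have hdetg : Tendsto (fun t => (g t).det) (nhdsWithin (0:ℝ) (Set.Ioi 0)) (nhds (1/4 : ℝ)) := by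
    have hc : Continuous fun m : Matrix (Fin 3) (Fin 3) ℝ => m.det :=
      Continuous.matrix_det continuous_id
    have := (hc.tendsto C0mat).comp hg
    rwa [detC0] at this
  have hev : ∀ᶠ t in nhdsWithin (0:ℝ) (Set.Ioi 0), (g t).det ≠ 0 :=
    hdetg.eventually_ne (by norm_num)
  obtain ⟨u, hu, hsub⟩ := mem_nhdsGT_iff_exists_Ioo_subset.mp hev
  -- the H function
  set H : ℝ → Matrix (Fin 3) (Fin 3) ℝ := fun t => t • (g t)⁻¹ with hHdef
  have hH : Tendsto H (nhdsWithin (0:ℝ) (Set.Ioi 0)) (nhds 0) := by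
    have hadj : Tendsto (fun t => (g t).adjugate) (nhdsWithin (0:ℝ) (Set.Ioi 0))
        (nhds C0mat.adjugate) :=
      ((Continuous.matrix_adjugate continuous_id).tendsto C0mat).comp hg
    have hinv : Tendsto (fun t => ((g t).det)⁻¹ • (g t).adjugate)
        (nhdsWithin (0:ℝ) (Set.Ioi 0)) (nhds (((1:ℝ)/4)⁻¹ • C0mat.adjugate)) :=
      (hdetg.inv₀ (by norm_num)).smul hadj
    have hid : Tendsto (fun t : ℝ => t) (nhdsWithin (0:ℝ) (Set.Ioi 0)) (nhds 0) :=
      tendsto_id.mono_left nhdsWithin_le_nhds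
    have heq : ∀ t, H t = t • (((g t).det)⁻¹ • (g t).adjugate) := by
      intro t
      rw [hHdef]
      simp only [Matrix.inv_def, Ring.inverse_eq_inv]
    have := hid.smul hinv
    rw [zero_smul] at this
    exact this.congr (fun t => (heq t).symm)
  -- choose α₁
  refine ⟨⟨min u a, lt_min hu ha, min_le_right _ _, ?_, ?_⟩, ?_, ?_⟩
  · -- invertibility
    intro t ht0 htm
    have hdg : (g t).det ≠ 0 := hsub ⟨ht0, lt_of_lt_of_le htm (min_le_left _ _)⟩
    have hΔH : (C t - M) * H t = 1 := by
      have hCM : C t - M = t⁻¹ • g t := by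
        rw [hgdef]; simp only [← smul_sub, smul_smul]
        rw [inv_mul_cancel₀ ht0.ne', one_smul]
      rw [hCM, hHdef]
      rw [Matrix.smul_mul, Matrix.mul_smul, smul_smul,
        Matrix.mul_nonsing_inv _ (isUnit_iff_ne_zero.2 hdg), inv_mul_cancel₀ ht0.ne', one_smul]
    have hmul : Smat C R t * Phi (R t, H t) = 1 := by
      have hStilde : Stilde C t =
          Matrix.fromBlocks 1 0 (Bmatᵀ * Amat⁻¹) 1 *
            (Matrix.fromBlocks Amat 0 0 (C t - M) * Matrix.fromBlocks 1 (Amat⁻¹ * Bmat) 0 1) := by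
        have := Matrix.fromBlocks_eq_of_invertible₁₁ Amat Bmat Bmatᵀ (C t)
        rw [Stilde, this, Matrix.invOf_eq_nonsing_inv, hMdef, Matrix.mul_assoc]
      have hD : Matrix.fromBlocks Amat 0 0 (C t - M) *
          Matrix.fromBlocks Amat⁻¹ (0 : Matrix (Fin 3) (Fin 3) ℝ)
            (0 : Matrix (Fin 3) (Fin 3) ℝ) (H t) = 1 := by
        rw [Matrix.fromBlocks_multiply]
        simp only [Matrix.mul_zero, Matrix.zero_mul, add_zero, zero_add, hAAinv, hΔH]
        exact Matrix.fromBlocks_one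
      rw [Smat, hStilde, Phi, Emat, Matrix.fromBlocks_transpose]
      simp only [Matrix.transpose_one, Matrix.transpose_zero, Matrix.transpose_neg,
        Matrix.mul_assoc]
      rw [cancel6 (tri_low' ((R t)ᵀ)), cancel6 (tri_up (Amat⁻¹ * Bmat)), cancel6 hD,
        cancel6 (tri_low (Bmatᵀ * Amat⁻¹))]
      exact tri_up' (R t)
    exact (Matrix.isUnit_iff_isUnit_det _).mpr (Matrix.isUnit_det_of_right_inverse hmul)
  · -- entrywise convergence
    have hPhiT : Tendsto (fun t => Phi (R t, H t)) (nhdsWithin (0:ℝ) (Set.Ioi 0))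
        (nhds T0mat) := by
      rw [← Phi_limit]
      exact (continuous_Phi.tendsto _).comp (hR.prodMk_nhds hH)
    have heqev : ∀ᶠ t in nhdsWithin (0:ℝ) (Set.Ioi 0),
        Phi (R t, H t) = (Smat C R t)⁻¹ := by
      filter_upwards [Ioo_mem_nhdsGT_of_mem ⟨le_refl (0:ℝ), lt_min hu ha⟩] with t ht
      have ht0 := ht.1
      have hdg : (g t).det ≠ 0 := hsub ⟨ht0, lt_of_lt_of_le ht.2 (min_le_left _ _)⟩
      have hΔH : (C t - M) * H t = 1 := by
        have hCM : C t - M = t⁻¹ • g t := by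
          rw [hgdef]; simp only [← smul_sub, smul_smul]
          rw [inv_mul_cancel₀ ht0.ne', one_smul]
        rw [hCM, hHdef]
        rw [Matrix.smul_mul, Matrix.mul_smul, smul_smul,
          Matrix.mul_nonsing_inv _ (isUnit_iff_ne_zero.2 hdg), inv_mul_cancel₀ ht0.ne', one_smul]
      have hmul : Smat C R t * Phi (R t, H t) = 1 := by
        have hStilde : Stilde C t =
            Matrix.fromBlocks 1 0 (Bmatᵀ * Amat⁻¹) 1 *
              (Matrix.fromBlocks Amat 0 0 (C t - M) *
                Matrix.fromBlocks 1 (Amat⁻¹ * Bmat) 0 1) := by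
          have := Matrix.fromBlocks_eq_of_invertible₁₁ Amat Bmat Bmatᵀ (C t)
          rw [Stilde, this, Matrix.invOf_eq_nonsing_inv, hMdef, Matrix.mul_assoc]
        have hD : Matrix.fromBlocks Amat 0 0 (C t - M) *
            Matrix.fromBlocks Amat⁻¹ (0 : Matrix (Fin 3) (Fin 3) ℝ)
              (0 : Matrix (Fin 3) (Fin 3) ℝ) (H t) = 1 := by
          rw [Matrix.fromBlocks_multiply]
          simp only [Matrix.mul_zero, Matrix.zero_mul, add_zero, zero_add, hAAinv, hΔH]
          exact Matrix.fromBlocks_one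
        rw [Smat, hStilde, Phi, Emat, Matrix.fromBlocks_transpose]
        simp only [Matrix.transpose_one, Matrix.transpose_zero, Matrix.transpose_neg,
          Matrix.mul_assoc]
        rw [cancel6 (tri_low' ((R t)ᵀ)), cancel6 (tri_up (Amat⁻¹ * Bmat)), cancel6 hD,
          cancel6 (tri_low (Bmatᵀ * Amat⁻¹))]
        exact tri_up' (R t)
      exact (Matrix.inv_eq_right_inv hmul).symm
    have hfinal : Tendsto (fun t => (Smat C R t)⁻¹) (nhdsWithin (0:ℝ) (Set.Ioi 0))
        (nhds T0mat) := hPhiT.congr' heqev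
    intro i j
    exact (tendsto_pi_nhds.mp (tendsto_pi_nhds.mp hfinal i) j)
  · -- positivity
    intro i j
    rcases i with i | i <;> rcases j with j | j <;>
      simp only [T0mat, Matrix.fromBlocks_apply₁₁, Matrix.fromBlocks_apply₁₂,
        Matrix.fromBlocks_apply₂₁, Matrix.fromBlocks_apply₂₂] <;>
      fin_cases i <;> fin_cases j <;>
      norm_num [Ainv_eq, R0mat, Matrix.mul_apply, Fin.sum_univ_three, Matrix.transpose_apply, Matrix.cons_val_zero, Matrix.cons_val_one, Matrix.cons_val_two, Matrix.head_cons, Matrix.vecHead, Matrix.vecTail, Function.comp]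
  · -- singularity
    have hT0 : T0mat = Matrix.fromBlocks 1 0 R0matᵀ 1 *
        (Matrix.fromBlocks Amat⁻¹ 0 0 0 * Matrix.fromBlocks 1 R0mat 0 1) := by
      simp [T0mat, Matrix.fromBlocks_multiply, Matrix.mul_assoc]
    rw [hT0, Matrix.det_mul, Matrix.det_mul]
    have : (Matrix.fromBlocks Amat⁻¹ (0 : Matrix (Fin 3) (Fin 3) ℝ)
        (0 : Matrix (Fin 3) (Fin 3) ℝ) (0 : Matrix (Fin 3) (Fin 3) ℝ)).det = 0 := by
      rw [Matrix.det_fromBlocks_zero₂₁]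
      simp
    rw [this]
    ring
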